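/- For every natural number n ≥ 0, in the polynomial ring ℤ[x, y] one has the congruence (x+y)^(3·2^(n+2)) − x^(3·2^(n+2)) − y^(3·2^(n+2)) ≡ 4·x^(2^n)·y^(11·2^n) + 2·x^(2·2^n)·y^(10·2^n) + 4·x^(3·2^n)·y^(9·2^n) + 7·x^(4·2^n)·y^(8·2^n) + 4·x^(6·2^n)·y^(6·2^n) + 7·x^(8·2^n)·y^(4·2^n) + 4·x^(9·2^n)·y^(3·2^n) + 2·x^(10·2^n)·y^(2·2^n) + 4·x^(11·2^n)·y^(2^n) modulo 8. -/
import Mathlib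

open MvPolynomial

lemma aux_pow4 {R : Type*} [CommRing R] (a c : R) (t : ℕ) :
    (8 : R) ∣ (a + 2 * c) ^ (4 * t) - a ^ (4 * t) := by
  have h : (8 : R) ∣ (a + 2 * c) ^ 4 - a ^ 4 :=
    ⟨a ^ 3 * c + 3 * a ^ 2 * c ^ 2 + 4 * a * c ^ 3 + 2 * c ^ 4, by ring⟩
  rw [pow_mul, pow_mul]
  exact h.trans (sub_dvd_pow_sub_pow _ _ t)

noncomputable def Eexpr (n : ℕ) : MvPolynomial (Fin 2) ℤ :=
    ((X 0 + X 1 : MvPolynomial (Fin 2) ℤ) ^ (3 * 2 ^ (n + 2))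
          - (X 0) ^ (3 * 2 ^ (n + 2)) - (X 1) ^ (3 * 2 ^ (n + 2)))
        - (4 * (X 0) ^ (2 ^ n) * (X 1) ^ (11 * 2 ^ n)
          + 2 * (X 0) ^ (2 * 2 ^ n) * (X 1) ^ (10 * 2 ^ n)
          + 4 * (X 0) ^ (3 * 2 ^ n) * (X 1) ^ (9 * 2 ^ n)
          + 7 * (X 0) ^ (4 * 2 ^ n) * (X 1) ^ (8 * 2 ^ n)
          + 4 * (X 0) ^ (6 * 2 ^ n) * (X 1) ^ (6 * 2 ^ n)
          + 7 * (X 0) ^ (8 * 2 ^ n) * (X 1) ^ (4 * 2 ^ n)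
          + 4 * (X 0) ^ (9 * 2 ^ n) * (X 1) ^ (3 * 2 ^ n)
          + 2 * (X 0) ^ (10 * 2 ^ n) * (X 1) ^ (2 * 2 ^ n)
          + 4 * (X 0) ^ (11 * 2 ^ n) * (X 1) ^ (2 ^ n))

lemma main_dvd (n : ℕ) : (8 : MvPolynomial (Fin 2) ℤ) ∣ Eexpr n := by
  induction n with
  | zero =>
    refine ⟨(X 0)^11 * X 1 + 8 * (X 0)^10 * (X 1)^2 + 27 * (X 0)^9 * (X 1)^3
      + 61 * (X 0)^8 * (X 1)^4 + 99 * (X 0)^7 * (X 1)^5 + 115 * (X 0)^6 * (X 1)^6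
      + 99 * (X 0)^5 * (X 1)^7 + 61 * (X 0)^4 * (X 1)^8 + 27 * (X 0)^3 * (X 1)^9
      + 8 * (X 0)^2 * (X 1)^10 + X 0 * (X 1)^11, ?_⟩
    show Eexpr 0 = _
    unfold Eexpr
    norm_num
    ring
  | succ k ih =>
    set σ : MvPolynomial (Fin 2) ℤ →ₐ[ℤ] MvPolynomial (Fin 2) ℤ :=
      aeval (fun i => (X i) ^ 2) with hσ
    have h1 : (8 : MvPolynomial (Fin 2) ℤ) ∣ σ (Eexpr k) := by
      have := map_dvd σ ih
      rwa [map_ofNat] at this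
    have h2 : (8 : MvPolynomial (Fin 2) ℤ) ∣
        (X 0 + X 1 : MvPolynomial (Fin 2) ℤ) ^ (3 * 2 ^ (k + 3))
          - ((X 0) ^ 2 + (X 1) ^ 2) ^ (3 * 2 ^ (k + 2)) := by
      have h := aux_pow4 ((X 0 : MvPolynomial (Fin 2) ℤ) ^ 2 + (X 1) ^ 2)
        (X 0 * X 1) (3 * 2 ^ k)
      have e1 : ((X 0 : MvPolynomial (Fin 2) ℤ) ^ 2 + (X 1) ^ 2 + 2 * (X 0 * X 1))
          ^ (4 * (3 * 2 ^ k)) = (X 0 + X 1) ^ (3 * 2 ^ (k + 3)) := by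
        rw [show ((X 0 : MvPolynomial (Fin 2) ℤ) ^ 2 + (X 1) ^ 2 + 2 * (X 0 * X 1))
          = (X 0 + X 1) ^ 2 by ring, ← pow_mul]
        congr 1
        ring
      have e2 : (4 * (3 * 2 ^ k)) = 3 * 2 ^ (k + 2) := by ring
      rwa [e1, e2] at h
    have key : Eexpr (k + 1) =
        ((X 0 + X 1 : MvPolynomial (Fin 2) ℤ) ^ (3 * 2 ^ (k + 3))
          - ((X 0) ^ 2 + (X 1) ^ 2) ^ (3 * 2 ^ (k + 2))) + σ (Eexpr k) := by
      unfold Eexpr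
      simp only [hσ, map_sub, map_add, map_mul, map_pow, aeval_X, map_ofNat]
      ring
    rw [key]
    exact dvd_add h2 h1

/-- For every `n : ℕ`, in `ℤ[x, y]` one has
`(x+y)^(3·2^(n+2)) − x^(3·2^(n+2)) − y^(3·2^(n+2)) ≡
  4·x^(2^n)·y^(11·2^n) + 2·x^(2·2^n)·y^(10·2^n) + 4·x^(3·2^n)·y^(9·2^n)
  + 7·x^(4·2^n)·y^(8·2^n) + 4·x^(6·2^n)·y^(6·2^n) + 7·x^(8·2^n)·y^(4·2^n)
  + 4·x^(9·2^n)·y^(3·2^n) + 2·x^(10·2^n)·y^(2·2^n) + 4·x^(11·2^n)·y^(2^n)`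
modulo `8`. Here `x = X 0`, `y = X 1`. -/
theorem pow_three_two_pow_congruence (n : ℕ) :
    ∀ m : Fin 2 →₀ ℕ, (8 : ℤ) ∣ MvPolynomial.coeff m
      (((X 0 + X 1 : MvPolynomial (Fin 2) ℤ) ^ (3 * 2 ^ (n + 2))
          - (X 0) ^ (3 * 2 ^ (n + 2)) - (X 1) ^ (3 * 2 ^ (n + 2)))
        - (4 * (X 0) ^ (2 ^ n) * (X 1) ^ (11 * 2 ^ n)
          + 2 * (X 0) ^ (2 * 2 ^ n) * (X 1) ^ (10 * 2 ^ n)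
          + 4 * (X 0) ^ (3 * 2 ^ n) * (X 1) ^ (9 * 2 ^ n)
          + 7 * (X 0) ^ (4 * 2 ^ n) * (X 1) ^ (8 * 2 ^ n)
          + 4 * (X 0) ^ (6 * 2 ^ n) * (X 1) ^ (6 * 2 ^ n)
          + 7 * (X 0) ^ (8 * 2 ^ n) * (X 1) ^ (4 * 2 ^ n)
          + 4 * (X 0) ^ (9 * 2 ^ n) * (X 1) ^ (3 * 2 ^ n)
          + 2 * (X 0) ^ (10 * 2 ^ n) * (X 1) ^ (2 * 2 ^ n)
          + 4 * (X 0) ^ (11 * 2 ^ n) * (X 1) ^ (2 ^ n))) := by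
  intro m
  obtain ⟨q, hq⟩ := main_dvd n
  have : MvPolynomial.coeff m (Eexpr n) = 8 * MvPolynomial.coeff m q := by
    rw [hq, show (8 : MvPolynomial (Fin 2) ℤ) = C 8 from by simp, coeff_C_mul]
  exact ⟨MvPolynomial.coeff m q, this⟩
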